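/- Define the edge P_E := { x in P : Tan(P_int, x) != -Tan(P_int, x) }. Assume f is three times continuously differentiable and D_x F-tilde(x, alpha) is invertible for all (x, alpha) in M. If x0 in P_E, then A(x0) intersects the boundary of the closed reduced simplex, i.e. x0 admits a KKT multiplier with some zero component. -/

import Mathlib

noncomputable def grad (n : ℕ) (g : (Fin n → ℝ) → ℝ) (x : Fin n → ℝ) : Fin n → ℝ :=
  fun j => fderiv ℝ g x (Pi.single j 1)

noncomputable def Ftilde (n K : ℕ) (f : Fin (K + 1) → (Fin n → ℝ) → ℝ)
    (p : (Fin n → ℝ) × (Fin K → ℝ)) : Fin n → ℝ :=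
  (∑ i : Fin K, p.2 i •
      (grad n (f i.castSucc) p.1 - grad n (f (Fin.last K)) p.1))
    + grad n (f (Fin.last K)) p.1

def openSimplex (K : ℕ) : Set (Fin K → ℝ) := {α | (∀ i, 0 < α i) ∧ ∑ i, α i < 1}

def closedSimplex (K : ℕ) : Set (Fin K → ℝ) := {α | (∀ i, 0 ≤ α i) ∧ ∑ i, α i ≤ 1}

noncomputable def DxFtilde (n K : ℕ) (f : Fin (K + 1) → (Fin n → ℝ) → ℝ)
    (p : (Fin n → ℝ) × (Fin K → ℝ)) : (Fin n → ℝ) →L[ℝ] (Fin n → ℝ) :=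
  fderiv ℝ (fun x => Ftilde n K f (x, p.2)) p.1

def ParetoCritical (n K : ℕ) (f : Fin (K + 1) → (Fin n → ℝ) → ℝ) : Set (Fin n → ℝ) :=
  {x | ∃ α ∈ closedSimplex K, Ftilde n K f (x, α) = 0}

def ParetoCriticalInt (n K : ℕ) (f : Fin (K + 1) → (Fin n → ℝ) → ℝ) : Set (Fin n → ℝ) :=
  {x | ∃ α ∈ openSimplex K, Ftilde n K f (x, α) = 0}

def Tan {E : Type*} [NormedAddCommGroup E] [NormedSpace ℝ E] (Y : Set E) (x : E) :
    Set E :=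
  {v | v = 0 ∨ ∃ u : ℕ → E, (∀ i, u i ≠ 0) ∧
    Filter.Tendsto u Filter.atTop (nhds 0) ∧ (∀ i, x + u i ∈ Y) ∧
    Filter.Tendsto (fun i => ‖u i‖⁻¹ • u i) Filter.atTop (nhds (‖v‖⁻¹ • v))}

/-- The edge of the Pareto critical set. -/
def ParetoEdge (n K : ℕ) (f : Fin (K + 1) → (Fin n → ℝ) → ℝ) : Set (Fin n → ℝ) :=
  {x ∈ ParetoCritical n K f |
    Tan (ParetoCriticalInt n K f) x ≠ Neg.neg '' Tan (ParetoCriticalInt n K f) x}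


open Filter Set

lemma contDiff_grad {n : ℕ} {g : (Fin n → ℝ) → ℝ} (hg : ContDiff ℝ 3 g) :
    ContDiff ℝ 2 (grad n g) := by
  have h : ContDiff ℝ 2 (fun x => fderiv ℝ g x) := hg.fderiv_right (by norm_num)
  exact contDiff_pi.mpr fun j => h.clm_apply contDiff_const

lemma contDiff_Ftilde {n K : ℕ} {f : Fin (K + 1) → (Fin n → ℝ) → ℝ}
    (hf : ∀ i, ContDiff ℝ 3 (f i)) : ContDiff ℝ 2 (Ftilde n K f) := by
  unfold Ftilde
  have hK : ContDiff ℝ 2 fun p : (Fin n → ℝ) × (Fin K → ℝ) =>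
      grad n (f (Fin.last K)) p.1 := (contDiff_grad (hf _)).comp contDiff_fst
  refine ContDiff.add (ContDiff.sum fun i _ => ?_) hK
  exact (contDiff_pi.mp contDiff_snd i).smul
    (((contDiff_grad (hf _)).comp contDiff_fst).sub hK)

lemma openSimplex_subset {K : ℕ} : openSimplex K ⊆ closedSimplex K :=
  fun α h => ⟨fun i => (h.1 i).le, h.2.le⟩

lemma isOpen_openSimplex {K : ℕ} : IsOpen (openSimplex K) := by
  have : openSimplex K = (⋂ i, {α : Fin K → ℝ | 0 < α i}) ∩ {α | ∑ i, α i < 1} := by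
    ext α; simp [openSimplex, Set.mem_iInter, and_comm]
  rw [this]
  exact ((isOpen_iInter_of_finite fun i =>
    isOpen_lt continuous_const (continuous_apply i))).inter
    (isOpen_lt (continuous_finset_sum _ fun i _ => continuous_apply i) continuous_const)

lemma isClosed_closedSimplex {K : ℕ} : IsClosed (closedSimplex K) := by
  have : closedSimplex K = (⋂ i, {α : Fin K → ℝ | 0 ≤ α i}) ∩ {α | ∑ i, α i ≤ 1} := by
    ext α; simp [closedSimplex, Set.mem_iInter, and_comm]
  rw [this]
  exact ((isClosed_iInter fun i =>
    isClosed_le continuous_const (continuous_apply i))).inter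
    (isClosed_le (continuous_finset_sum _ fun i _ => continuous_apply i) continuous_const)

lemma isCompact_closedSimplex {K : ℕ} : IsCompact (closedSimplex K) := by
  refine Metric.isCompact_of_isClosed_isBounded isClosed_closedSimplex ?_
  rw [isBounded_iff_forall_norm_le]
  refine ⟨1, fun α hα => ?_⟩
  rw [pi_norm_le_iff_of_nonneg zero_le_one]
  intro i
  rw [Real.norm_eq_abs, abs_le]
  constructor
  · linarith [hα.1 i]
  · calc α i ≤ ∑ j, α j := Finset.single_le_sum (fun j _ => hα.1 j) (Finset.mem_univ i)
    _ ≤ 1 := hα.2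


lemma mem_tan_of_eventually {E : Type*} [NormedAddCommGroup E] [NormedSpace ℝ E]
    {Y : Set E} {x : E} {v : E} (u : ℕ → E)
    (h₁ : ∀ᶠ i in Filter.atTop, u i ≠ 0) (h₂ : Filter.Tendsto u Filter.atTop (nhds 0))
    (h₃ : ∀ᶠ i in Filter.atTop, x + u i ∈ Y)
    (h₄ : Filter.Tendsto (fun i => ‖u i‖⁻¹ • u i) Filter.atTop (nhds (‖v‖⁻¹ • v))) :
    v ∈ Tan Y x := by
  obtain ⟨N, hN⟩ := Filter.eventually_atTop.1 (h₁.and h₃)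
  have hshift : Filter.Tendsto (fun i : ℕ => i + N) Filter.atTop Filter.atTop :=
    Filter.tendsto_add_atTop_nat N
  exact Or.inr ⟨fun i => u (i + N), fun i => (hN _ (Nat.le_add_left N i)).1,
    h₂.comp hshift, fun i => (hN _ (Nat.le_add_left N i)).2, h₄.comp hshift⟩

lemma neg_image_eq_self {E : Type*} [AddCommGroup E] (S : Set E)
    (h : ∀ v ∈ S, -v ∈ S) : S = Neg.neg '' S := by
  ext w
  constructor
  · intro hw
    exact ⟨-w, h w hw, neg_neg w⟩
  · rintro ⟨v, hv, rfl⟩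
    exact h v hv


set_option maxHeartbeats 1000000 in
/-- points on the edge of the Pareto critical set admit a KKT multiplier
on the boundary of the closed reduced simplex (i.e. with some zero component). -/
theorem edge_has_boundary_multiplier (n K : ℕ) (hK : 0 < K)
    (f : Fin (K + 1) → (Fin n → ℝ) → ℝ) (hf : ∀ i, ContDiff ℝ 3 (f i))
    (hreg : ∀ p : (Fin n → ℝ) × (Fin K → ℝ),
      p.2 ∈ openSimplex K → Ftilde n K f p = 0 → IsUnit (DxFtilde n K f p))
    (x₀ : Fin n → ℝ) (hx₀ : x₀ ∈ ParetoEdge n K f) :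
    ∃ α ∈ closedSimplex K, Ftilde n K f (x₀, α) = 0 ∧ α ∉ openSimplex K := by
  obtain ⟨hPC, hTanne⟩ := hx₀
  obtain ⟨α₀, hα₀c, hα₀F⟩ := hPC
  by_contra hcon
  push_neg at hcon
  have hα₀o : α₀ ∈ openSimplex K := hcon α₀ hα₀c hα₀F
  set F := Ftilde n K f with hFdef
  set c : Fin K → (Fin n → ℝ) :=
    fun i => grad n (f i.castSucc) x₀ - grad n (f (Fin.last K)) x₀ with hc
  set B : (Fin K → ℝ) →L[ℝ] (Fin n → ℝ) :=
    ∑ i, (ContinuousLinearMap.proj i).smulRight (c i) with hB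
  have hBapp : ∀ α, B α = ∑ i, α i • c i := by
    intro α
    simp [hB, ContinuousLinearMap.sum_apply]
  have hFx₀ : ∀ α, F (x₀, α) = B α + grad n (f (Fin.last K)) x₀ := by
    intro α
    rw [hBapp]
    rfl
  by_cases hBinj : Function.Injective B
  · -- injective case: contradiction with the tangent cone asymmetry
    exfalso
    apply hTanne
    have hFc2 : ContDiff ℝ 2 F := contDiff_Ftilde hf
    have hmult_uniq : ∀ β, F (x₀, β) = 0 → β = α₀ := by
      intro β hβ
      apply hBinj
      have h1 := hFx₀ β
      have h2 := hFx₀ α₀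
      rw [hβ] at h1
      rw [hα₀F] at h2
      exact add_right_cancel (h1.symm.trans h2)
    have hFs : HasStrictFDerivAt F (fderiv ℝ F (x₀, α₀)) (x₀, α₀) :=
      hFc2.contDiffAt.hasStrictFDerivAt (by norm_num)
    set DF := fderiv ℝ F (x₀, α₀) with hDFdef
    obtain ⟨e, he⟩ := hreg (x₀, α₀) hα₀o hα₀F
    have hNl : ∀ y, (↑e⁻¹ : (Fin n → ℝ) →L[ℝ] (Fin n → ℝ)) ((↑e : (Fin n → ℝ) →L[ℝ] (Fin n → ℝ)) y) = y := by
      intro y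
      rw [← ContinuousLinearMap.mul_apply, e.inv_mul, ContinuousLinearMap.one_apply]
    have hNr : ∀ y, (↑e : (Fin n → ℝ) →L[ℝ] (Fin n → ℝ)) ((↑e⁻¹ : (Fin n → ℝ) →L[ℝ] (Fin n → ℝ)) y) = y := by
      intro y
      rw [← ContinuousLinearMap.mul_apply, e.mul_inv, ContinuousLinearMap.one_apply]
    have hDFinl : ∀ ξ, DF (ξ, (0 : Fin K → ℝ)) = (↑e : (Fin n → ℝ) →L[ℝ] (Fin n → ℝ)) ξ := by
      have h1 : HasFDerivAt (fun x => F (x, α₀))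
          (DF.comp (ContinuousLinearMap.inl ℝ (Fin n → ℝ) (Fin K → ℝ))) x₀ :=
        HasFDerivAt.comp (g := F) x₀ hFs.hasFDerivAt (hasFDerivAt_prodMk_left (𝕜 := ℝ) x₀ α₀)
      have h2 : (↑e : (Fin n → ℝ) →L[ℝ] (Fin n → ℝ)) =
          DF.comp (ContinuousLinearMap.inl ℝ (Fin n → ℝ) (Fin K → ℝ)) := by
        rw [he]
        exact h1.fderiv
      intro ξ
      rw [h2]
      rfl
    have hB_fderiv : HasFDerivAt (fun α => F (x₀, α)) B α₀ := by
      have h1 : (fun α => F (x₀, α)) = fun α => B α + grad n (f (Fin.last K)) x₀ :=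
        funext hFx₀
      rw [h1]
      exact B.hasFDerivAt.add_const _
    have hDFinr : ∀ η, DF ((0 : Fin n → ℝ), η) = B η := by
      have h1 : HasFDerivAt (fun α => F (x₀, α))
          (DF.comp (ContinuousLinearMap.inr ℝ (Fin n → ℝ) (Fin K → ℝ))) α₀ :=
        hFs.hasFDerivAt.comp α₀ (hasFDerivAt_prodMk_right x₀ α₀)
      have h2 : B = DF.comp (ContinuousLinearMap.inr ℝ (Fin n → ℝ) (Fin K → ℝ)) :=
        hB_fderiv.unique h1
      intro η
      rw [h2]
      rfl
    have hDF : ∀ p : (Fin n → ℝ) × (Fin K → ℝ),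
        DF p = (↑e : (Fin n → ℝ) →L[ℝ] (Fin n → ℝ)) p.1 + B p.2 := by
      intro p
      calc DF p = DF ((p.1, (0 : Fin K → ℝ)) + ((0 : Fin n → ℝ), p.2)) := by
            rw [Prod.mk_add_mk, add_zero, zero_add]
        _ = _ := by rw [map_add, hDFinl, hDFinr]
    set Φ'L : ((Fin n → ℝ) × (Fin K → ℝ)) →L[ℝ] ((Fin n → ℝ) × (Fin K → ℝ)) :=
      DF.prod (ContinuousLinearMap.snd ℝ (Fin n → ℝ) (Fin K → ℝ)) with hΦ'L
    set Inv : ((Fin n → ℝ) × (Fin K → ℝ)) →L[ℝ] ((Fin n → ℝ) × (Fin K → ℝ)) :=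
      ((↑e⁻¹ : (Fin n → ℝ) →L[ℝ] (Fin n → ℝ)).comp
        ((ContinuousLinearMap.fst ℝ (Fin n → ℝ) (Fin K → ℝ)) -
          B.comp (ContinuousLinearMap.snd ℝ (Fin n → ℝ) (Fin K → ℝ)))).prod
        (ContinuousLinearMap.snd ℝ (Fin n → ℝ) (Fin K → ℝ)) with hInv
    have hΦ'Lapp : ∀ p, Φ'L p = (DF p, p.2) := fun p => rfl
    have hInvapp : ∀ q : (Fin n → ℝ) × (Fin K → ℝ),
        Inv q = ((↑e⁻¹ : (Fin n → ℝ) →L[ℝ] (Fin n → ℝ)) (q.1 - B q.2), q.2) := fun q => rfl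
    have hleftinv : Function.LeftInverse Inv Φ'L := by
      intro p
      rw [hΦ'Lapp, hInvapp]
      have h1 : DF p - B p.2 = (↑e : (Fin n → ℝ) →L[ℝ] (Fin n → ℝ)) p.1 := by
        rw [hDF, add_sub_cancel_right]
      rw [h1, hNl]
    have hrightinv : Function.RightInverse Inv Φ'L := by
      intro q
      rw [hInvapp, hΦ'Lapp]
      have h1 : DF ((↑e⁻¹ : (Fin n → ℝ) →L[ℝ] (Fin n → ℝ)) (q.1 - B q.2), q.2) = q.1 := by
        rw [hDF, hNr]
        simp
      rw [h1]
    set eqv := ContinuousLinearEquiv.equivOfInverse Φ'L Inv hleftinv hrightinv with heqv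
    set Φ : ((Fin n → ℝ) × (Fin K → ℝ)) → ((Fin n → ℝ) × (Fin K → ℝ)) :=
      fun p => (F p, p.2) with hΦ
    have hΦs : HasStrictFDerivAt Φ
        (eqv : ((Fin n → ℝ) × (Fin K → ℝ)) →L[ℝ] ((Fin n → ℝ) × (Fin K → ℝ))) (x₀, α₀) := by
      have h1 : (eqv : ((Fin n → ℝ) × (Fin K → ℝ)) →L[ℝ] ((Fin n → ℝ) × (Fin K → ℝ))) = Φ'L := rfl
      rw [h1, hΦ'L]
      exact hFs.prodMk (ContinuousLinearMap.snd ℝ (Fin n → ℝ) (Fin K → ℝ)).hasStrictFDerivAt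
    set Ψ := hΦs.localInverse Φ eqv (x₀, α₀) with hΨ
    have hΦ0 : Φ (x₀, α₀) = ((0 : Fin n → ℝ), α₀) := by
      rw [hΦ]
      simp only [hα₀F]
    set g : (Fin K → ℝ) → (Fin n → ℝ) := fun β => (Ψ ((0 : Fin n → ℝ), β)).1 with hg
    have hΨx₀ : Ψ ((0 : Fin n → ℝ), α₀) = (x₀, α₀) := by
      rw [← hΦ0]
      exact hΦs.localInverse_apply_image
    have hgα₀ : g α₀ = x₀ := by rw [hg]; simp only [hΨx₀]
    have hΨs : HasStrictFDerivAt Ψ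
        ((eqv.symm : ((Fin n → ℝ) × (Fin K → ℝ)) →L[ℝ] ((Fin n → ℝ) × (Fin K → ℝ))))
        ((0 : Fin n → ℝ), α₀) := hΦ0 ▸ hΦs.to_localInverse
    set Lg : (Fin K → ℝ) →L[ℝ] (Fin n → ℝ) :=
      (ContinuousLinearMap.fst ℝ (Fin n → ℝ) (Fin K → ℝ)).comp
        (((eqv.symm : ((Fin n → ℝ) × (Fin K → ℝ)) →L[ℝ] ((Fin n → ℝ) × (Fin K → ℝ)))).comp
          (ContinuousLinearMap.inr ℝ (Fin n → ℝ) (Fin K → ℝ))) with hLg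
    have hgs : HasStrictFDerivAt g Lg α₀ := by
      have h4 : HasStrictFDerivAt (fun β : Fin K → ℝ => ((0 : Fin n → ℝ), β))
          (ContinuousLinearMap.inr ℝ (Fin n → ℝ) (Fin K → ℝ)) α₀ :=
        (ContinuousLinearMap.inr ℝ (Fin n → ℝ) (Fin K → ℝ)).hasStrictFDerivAt
      have h5 := hΨs.comp α₀ h4
      have h6 := (ContinuousLinearMap.fst ℝ (Fin n → ℝ) (Fin K → ℝ)).hasStrictFDerivAt.comp α₀ h5
      exact h6
    have hLgker : ∀ η, Lg η = 0 → η = 0 := by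
      intro η h0
      have happ : eqv (eqv.symm ((0 : Fin n → ℝ), η)) = ((0 : Fin n → ℝ), η) :=
        eqv.apply_symm_apply _
      set p := eqv.symm ((0 : Fin n → ℝ), η) with hp
      have h7 : Φ'L p = ((0 : Fin n → ℝ), η) := happ
      have hp2 : p.2 = η := by
        have := congrArg Prod.snd h7
        simpa [hΦ'Lapp] using this
      have hp1 : p.1 = 0 := h0
      have hDFp : DF p = 0 := by
        have := congrArg Prod.fst h7
        simpa [hΦ'Lapp] using this
      rw [hDF, hp1, hp2, map_zero, zero_add] at hDFp
      have : B η = B 0 := by rw [map_zero, hDFp]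
      exact hBinj this
    obtain ⟨Kc, hKc0, hKlip⟩ :=
      LinearMap.exists_antilipschitzWith (Lg : (Fin K → ℝ) →ₗ[ℝ] (Fin n → ℝ))
        (LinearMap.ker_eq_bot'.mpr fun m hm => hLgker m hm)
    have hKnorm : ∀ y, ‖y‖ ≤ (Kc : ℝ) * ‖Lg y‖ := by
      intro y
      have h1 := hKlip.le_mul_dist y 0
      simpa [dist_zero_right, map_zero] using h1
    -- local solvability and uniqueness
    have hleft : ∀ᶠ p in nhds (x₀, α₀), Ψ (Φ p) = p := hΦs.eventually_left_inverse
    have hright : ∀ᶠ q in nhds ((0 : Fin n → ℝ), α₀), Φ (Ψ q) = q :=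
      hΦ0 ▸ hΦs.eventually_right_inverse
    have hsolve : ∀ᶠ β in nhds α₀, F (g β, β) = 0 ∧ Ψ ((0 : Fin n → ℝ), β) = (g β, β) := by
      have htend : Filter.Tendsto (fun β : Fin K → ℝ => ((0 : Fin n → ℝ), β))
          (nhds α₀) (nhds ((0 : Fin n → ℝ), α₀)) :=
        (continuous_const.prodMk continuous_id).tendsto α₀
      filter_upwards [htend.eventually hright] with β hβ
      have h1 : F (Ψ ((0 : Fin n → ℝ), β)) = 0 := congrArg Prod.fst hβ
      have h2 : (Ψ ((0 : Fin n → ℝ), β)).2 = β := congrArg Prod.snd hβ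
      have h3 : Ψ ((0 : Fin n → ℝ), β) = (g β, β) := by
        rw [hg]
        exact Prod.ext rfl h2
      refine ⟨?_, h3⟩
      rw [← h3]
      exact h1
    have huniq : ∀ᶠ p in nhds (x₀, α₀), F p = 0 → p.1 = g p.2 := by
      filter_upwards [hleft] with p hp hFp
      have h1 : Φ p = ((0 : Fin n → ℝ), p.2) := by
        rw [hΦ]
        simp only [hFp]
      rw [h1] at hp
      have h2 : g p.2 = (Ψ ((0 : Fin n → ℝ), p.2)).1 := rfl
      rw [h2, hp]
    -- tangent cone symmetry
    refine neg_image_eq_self _ fun v hv => ?_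
    rcases eq_or_ne v 0 with rfl | hvne
    · exact Or.inl neg_zero
    rcases hv with rfl | ⟨u, hu0, hulim, humem, hudir⟩
    · exact absurd rfl hvne
    have humem' : ∀ i, ∃ α ∈ openSimplex K, F (x₀ + u i, α) = 0 := humem
    choose β hβo' hβF' using humem'
    obtain ⟨βstar, hβstarc, φ, hφ, hβφ⟩ := isCompact_closedSimplex.tendsto_subseq
      (fun i => openSimplex_subset (hβo' i))
    have huφ : Filter.Tendsto (fun i => u (φ i)) Filter.atTop (nhds 0) :=
      hulim.comp hφ.tendsto_atTop
    have hβφ' : Filter.Tendsto (fun i => β (φ i)) Filter.atTop (nhds βstar) := hβφ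
    have hxadd : Filter.Tendsto (fun i => x₀ + u (φ i)) Filter.atTop (nhds x₀) := by
      have := tendsto_const_nhds (α := ℕ) (x := x₀) |>.add huφ
      simpa using this
    have hβstarF : F (x₀, βstar) = 0 := by
      have h1 : Filter.Tendsto (fun i => F (x₀ + u (φ i), β (φ i))) Filter.atTop
          (nhds (F (x₀, βstar))) :=
        (hFc2.continuous.tendsto _).comp (hxadd.prodMk_nhds hβφ')
      have h2 : (fun i => F (x₀ + u (φ i), β (φ i))) = fun _ => (0 : Fin n → ℝ) :=
        funext fun i => hβF' (φ i)
      rw [h2] at h1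
      exact tendsto_nhds_unique h1 tendsto_const_nhds
    have hβstar_eq : βstar = α₀ := hmult_uniq _ hβstarF
    rw [hβstar_eq] at hβφ'
    set w : ℕ → Fin K → ℝ := fun i => β (φ i) - α₀ with hwdef
    have hwlim : Filter.Tendsto w Filter.atTop (nhds 0) := by
      have := hβφ'.sub (tendsto_const_nhds (x := α₀))
      simpa using this
    have hmw : Filter.Tendsto (fun i => α₀ - w i) Filter.atTop (nhds α₀) := by
      have := (tendsto_const_nhds (x := α₀)).sub hwlim
      simpa using this
    set u' : ℕ → Fin n → ℝ := fun i => g (α₀ - w i) - x₀ with hu'def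
    have hxtend' : Filter.Tendsto (fun i => (x₀ + u (φ i), β (φ i))) Filter.atTop
        (nhds (x₀, α₀)) := hxadd.prodMk_nhds hβφ'
    have ha : ∀ᶠ i in Filter.atTop, x₀ + u (φ i) = g (β (φ i)) := by
      filter_upwards [hxtend'.eventually huniq] with i hi
      exact hi (hβF' (φ i))
    have hb : ∀ᶠ i in Filter.atTop, F (g (α₀ - w i), α₀ - w i) = 0 ∧
        Ψ ((0 : Fin n → ℝ), α₀ - w i) = (g (α₀ - w i), α₀ - w i) := hmw.eventually hsolve
    have hco : ∀ᶠ i in Filter.atTop, α₀ - w i ∈ openSimplex K :=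
      hmw.eventually (isOpen_openSimplex.eventually_mem hα₀o)
    have hwne : ∀ᶠ i in Filter.atTop, w i ≠ 0 := by
      filter_upwards [ha] with i hi hwi
      have h1 : β (φ i) = α₀ := by
        have : β (φ i) - α₀ = 0 := hwi
        rwa [sub_eq_zero] at this
      rw [h1, hgα₀] at hi
      exact hu0 (φ i) (by rwa [add_eq_left] at hi)
    have hu'ne : ∀ᶠ i in Filter.atTop, u' i ≠ 0 := by
      filter_upwards [hb, hwne] with i hi hwi hui
      have h1 : g (α₀ - w i) = x₀ := by
        have : g (α₀ - w i) - x₀ = 0 := hui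
        rwa [sub_eq_zero] at this
      rw [h1] at hi
      have h2 := hmult_uniq _ hi.1
      exact hwi (by rwa [sub_eq_self] at h2)
    have hu'lim : Filter.Tendsto u' Filter.atTop (nhds 0) := by
      have h1 : Filter.Tendsto (fun i => g (α₀ - w i)) Filter.atTop (nhds x₀) := by
        have := (hgs.continuousAt.tendsto).comp hmw
        rwa [hgα₀] at this
      have := h1.sub (tendsto_const_nhds (x := x₀))
      simpa using this
    have hmem' : ∀ᶠ i in Filter.atTop, x₀ + u' i ∈ ParetoCriticalInt n K f := by
      filter_upwards [hb, hco] with i hi hci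
      refine ⟨α₀ - w i, hci, ?_⟩
      have h1 : x₀ + u' i = g (α₀ - w i) := by
        show x₀ + (g (α₀ - w i) - x₀) = g (α₀ - w i)
        abel
      rw [h1]
      exact hi.1
    -- asymptotic analysis
    have hlo : (fun q => g q - g α₀ - Lg (q - α₀)) =o[nhds α₀] fun q => q - α₀ :=
      hgs.hasFDerivAt.isLittleO
    have h1o : (fun i => u (φ i) - Lg (w i)) =o[Filter.atTop] w := by
      have h1 := hlo.comp_tendsto hβφ'
      have h2 : (fun i => g (β (φ i)) - g α₀ - Lg (β (φ i) - α₀)) =o[Filter.atTop]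
          fun i => β (φ i) - α₀ := h1
      refine h2.congr' ?_ ?_
      · filter_upwards [ha] with i hi
        rw [← hi, hgα₀]
        have : x₀ + u (φ i) - x₀ = u (φ i) := by abel
        rw [this]
      · exact Filter.Eventually.of_forall fun i => rfl
    have h2o : (fun i => u' i + Lg (w i)) =o[Filter.atTop] w := by
      have h1 := hlo.comp_tendsto hmw
      have h2 : (fun i => g (α₀ - w i) - g α₀ - Lg ((α₀ - w i) - α₀)) =o[Filter.atTop]
          fun i => (α₀ - w i) - α₀ := h1
      have h3 : (fun i => g (α₀ - w i) - g α₀ - Lg ((α₀ - w i) - α₀)) =o[Filter.atTop]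
          fun i => -(w i) := h2.congr_right fun i => by abel
      have h4 := h3.trans_isBigO ((Asymptotics.isBigO_refl w Filter.atTop).neg_left)
      refine h4.congr_left fun i => ?_
      rw [hgα₀]
      have h5 : (α₀ - w i) - α₀ = -(w i) := by abel
      rw [h5, map_neg]
      rw [hu'def]
      beta_reduce
      abel
    have ho_sum : (fun i => u (φ i) + u' i) =o[Filter.atTop] w := by
      have := h1o.add h2o
      refine this.congr_left fun i => ?_
      abel
    have hKpos : (0 : ℝ) < (Kc : ℝ) := by exact_mod_cast hKc0
    have hwO : w =O[Filter.atTop] fun i => u (φ i) := by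
      rw [Asymptotics.isBigO_iff]
      refine ⟨2 * (Kc : ℝ), ?_⟩
      have hcpos : (0 : ℝ) < (2 * (Kc : ℝ))⁻¹ := by positivity
      filter_upwards [h1o.def hcpos] with i hi
      have h1 : ‖w i‖ ≤ (Kc : ℝ) * ‖Lg (w i)‖ := hKnorm (w i)
      have h2 : ‖Lg (w i)‖ ≤ ‖u (φ i)‖ + ‖u (φ i) - Lg (w i)‖ := by
        have := norm_sub_le (u (φ i)) (u (φ i) - Lg (w i))
        have h3 : u (φ i) - (u (φ i) - Lg (w i)) = Lg (w i) := by abel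
        rwa [h3] at this
      have h4 : (Kc : ℝ) * ((2 * (Kc : ℝ))⁻¹ * ‖w i‖) = ‖w i‖ / 2 := by
        field_simp
      have h5 : ‖w i‖ ≤ (Kc : ℝ) * ‖u (φ i)‖ + ‖w i‖ / 2 := by
        calc ‖w i‖ ≤ (Kc : ℝ) * ‖Lg (w i)‖ := h1
          _ ≤ (Kc : ℝ) * (‖u (φ i)‖ + ‖u (φ i) - Lg (w i)‖) :=
              mul_le_mul_of_nonneg_left h2 hKpos.le
          _ ≤ (Kc : ℝ) * (‖u (φ i)‖ + (2 * (Kc : ℝ))⁻¹ * ‖w i‖) :=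
              mul_le_mul_of_nonneg_left (add_le_add_right hi _) hKpos.le
          _ = (Kc : ℝ) * ‖u (φ i)‖ + (Kc : ℝ) * ((2 * (Kc : ℝ))⁻¹ * ‖w i‖) := by ring
          _ = (Kc : ℝ) * ‖u (φ i)‖ + ‖w i‖ / 2 := by rw [h4]
      linarith
    have ho_uu : (fun i => u (φ i) + u' i) =o[Filter.atTop] fun i => u (φ i) :=
      ho_sum.trans_isBigO hwO
    have hdir : Filter.Tendsto (fun i => ‖u (φ i)‖⁻¹ • u (φ i)) Filter.atTop
        (nhds (‖v‖⁻¹ • v)) := hudir.comp hφ.tendsto_atTop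
    have htend0 : Filter.Tendsto (fun i => ‖u (φ i)‖⁻¹ • (u (φ i) + u' i)) Filter.atTop
        (nhds 0) := by
      have hnn := ho_uu.norm_norm
      have hzero : ∀ i, ‖u (φ i)‖ = (0 : ℝ) → ‖u (φ i) + u' i‖ = 0 := fun i h =>
        absurd h (norm_ne_zero_iff.2 (hu0 (φ i)))
      have hratio := (Asymptotics.isLittleO_iff_tendsto hzero).1 hnn
      rw [tendsto_zero_iff_norm_tendsto_zero]
      refine hratio.congr fun i => ?_
      rw [norm_smul, norm_inv, norm_norm, div_eq_inv_mul]
    have hq : Filter.Tendsto (fun i => ‖u (φ i)‖⁻¹ • u' i) Filter.atTop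
        (nhds (-(‖v‖⁻¹ • v))) := by
      have h1 : (fun i => ‖u (φ i)‖⁻¹ • u' i) =
          fun i => (‖u (φ i)‖⁻¹ • (u (φ i) + u' i)) - ‖u (φ i)‖⁻¹ • u (φ i) := by
        funext i
        rw [smul_add]
        abel
      rw [h1]
      have := htend0.sub hdir
      simpa using this
    have hvhat : ‖‖v‖⁻¹ • v‖ = 1 := by
      rw [norm_smul, norm_inv, norm_norm, inv_mul_cancel₀ (norm_ne_zero_iff.2 hvne)]
    have hcont2 : ContinuousAt (fun y : Fin n → ℝ => ‖y‖⁻¹ • y) (-(‖v‖⁻¹ • v)) := by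
      have hne : ‖(-(‖v‖⁻¹ • v) : Fin n → ℝ)‖ ≠ 0 := by
        rw [norm_neg, hvhat]
        norm_num
      exact ((continuousAt_id.norm).inv₀ hne).smul continuousAt_id
    have hq2 := hcont2.tendsto.comp hq
    have hlimval : (‖(-(‖v‖⁻¹ • v) : Fin n → ℝ)‖⁻¹ • (-(‖v‖⁻¹ • v) : Fin n → ℝ) : Fin n → ℝ)
        = -(‖v‖⁻¹ • v) := by
      rw [norm_neg, hvhat]
      norm_num
    rw [hlimval] at hq2
    have hfinal : Filter.Tendsto (fun i => ‖u' i‖⁻¹ • u' i) Filter.atTop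
        (nhds (‖-v‖⁻¹ • -v)) := by
      have htgt : (‖-v‖⁻¹ • -v : Fin n → ℝ) = -(‖v‖⁻¹ • v) := by
        rw [norm_neg, smul_neg]
      rw [htgt]
      refine hq2.congr' ?_
      filter_upwards [hu'ne] with i hi
      have ha' : ‖u (φ i)‖⁻¹ ≠ 0 := inv_ne_zero (norm_ne_zero_iff.2 (hu0 (φ i)))
      have hnormq : ‖‖u (φ i)‖⁻¹ • u' i‖ = ‖u (φ i)‖⁻¹ * ‖u' i‖ := by
        rw [norm_smul, norm_inv, norm_norm]
      show (fun y : Fin n → ℝ => ‖y‖⁻¹ • y) (‖u (φ i)‖⁻¹ • u' i) = ‖u' i‖⁻¹ • u' i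
      simp only
      rw [hnormq, smul_smul]
      congr 1
      have hu'n : ‖u' i‖ ≠ 0 := norm_ne_zero_iff.2 hi
      have hun : ‖u (φ i)‖ ≠ 0 := norm_ne_zero_iff.2 (hu0 (φ i))
      field_simp
    exact mem_tan_of_eventually u' hu'ne hu'lim hmem' hfinal
  · -- non-injective case : travel along kernel direction to the boundary
    obtain ⟨a, b, hab, hne⟩ := Function.not_injective_iff.1 hBinj
    set η := a - b with hη
    have hηne : η ≠ 0 := sub_ne_zero.2 hne
    have hBη : B η = 0 := by rw [hη, map_sub, hab, sub_self]
    obtain ⟨j, hj⟩ := Function.ne_iff.1 hηne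
    have hjne : η j ≠ 0 := by simpa using hj
    set T : Set ℝ := {t : ℝ | α₀ + t • η ∈ closedSimplex K} with hT
    have hcont : Continuous fun t : ℝ => α₀ + t • η :=
      continuous_const.add (continuous_id.smul continuous_const)
    have h0T : (0 : ℝ) ∈ T := by simpa [hT] using hα₀c
    have hTclosed : IsClosed T := isClosed_closedSimplex.preimage hcont
    have hTbdd : BddAbove T := by
      refine ⟨(1 + |α₀ j|) / |η j|, fun t ht => ?_⟩
      have h1 : 0 ≤ α₀ j + t * η j := ht.1 j
      have h2 : α₀ j + t * η j ≤ 1 := by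
        calc α₀ j + t * η j ≤ ∑ i, (α₀ + t • η) i :=
              Finset.single_le_sum (fun i _ => ht.1 i) (Finset.mem_univ j)
          _ ≤ 1 := ht.2
      have habs : |t * η j| ≤ 1 + |α₀ j| := by
        have hα1 : -|α₀ j| ≤ α₀ j := neg_abs_le _
        have hα2 : α₀ j ≤ |α₀ j| := le_abs_self _
        rw [abs_le]
        constructor <;> linarith
      have : |t| * |η j| ≤ 1 + |α₀ j| := by rwa [← abs_mul]
      have hjpos : 0 < |η j| := abs_pos.2 hjne
      calc t ≤ |t| := le_abs_self t
        _ ≤ (1 + |α₀ j|) / |η j| := by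
            rw [le_div_iff₀ hjpos]; exact this
    set tmax := sSup T with htmaxdef
    have htmax : tmax ∈ T := hTclosed.csSup_mem ⟨0, h0T⟩ hTbdd
    have hβF : F (x₀, α₀ + tmax • η) = 0 := by
      rw [hFx₀, map_add, map_smul, hBη, smul_zero, add_zero, ← hFx₀, hα₀F]
    have hβo : α₀ + tmax • η ∈ openSimplex K := hcon _ htmax hβF
    have hev : ∀ᶠ t in nhds tmax, α₀ + t • η ∈ openSimplex K :=
      hcont.continuousAt.preimage_mem_nhds (isOpen_openSimplex.mem_nhds hβo)
    obtain ⟨ε, hε, hball⟩ := Metric.eventually_nhds_iff.1 hev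
    have hmem : tmax + ε / 2 ∈ T := by
      refine openSimplex_subset (hball ?_)
      rw [Real.dist_eq, show tmax + ε / 2 - tmax = ε / 2 by ring, abs_of_pos (by linarith)]
      linarith
    have := le_csSup hTbdd hmem
    linarith
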